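/- Suppose the clearing condition Σ_{i∈I}(P_i + P°_i) = 0 holds, where for each clearing member i, J_i ∈ {0,1} is its survival indicator, P_i and P°_i are its promised cash flows on the client and house accounts, MtM_i, PIM_i, VM_i, IM_i its variation and initial margins, and DFC_i ≥ 0 its default fund contribution. Then the total cash flow received by the CCP, namely Σ_i [ J_i(P_i + P°_i) + (1−J_i)( P_i ∧ (MtM_i + PIM_i) + P°_i ∧ (VM_i + IM_i) + ((P_i − MtM_i − PIM_i)⁺ + (P°_i − VM_i − IM_i)⁺) ∧ DFC_i ) ], equals −H, where H = Σ_i (1−J_i)·( (P_i − MtM_i − PIM_i)⁺ + (P°_i − VM_i − IM_i)⁺ − DFC_i )⁺. -/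
import Mathlib


open Finset

/-- Under the CCP clearing condition, the total cash flow received by the CCP
equals minus the CCP loss `H` borne by survivors. -/
theorem stmt_5 {I : Type*} [Fintype I]
    (J P P' MtM VM PIM IM DFC : I → ℝ)
    (hJ : ∀ i, J i = 0 ∨ J i = 1)
    (hPIM : ∀ i, 0 ≤ PIM i) (hIM : ∀ i, 0 ≤ IM i) (hDFC : ∀ i, 0 ≤ DFC i)
    (hclear : ∑ i, (P i + P' i) = 0) :
    ∑ i, (J i * (P i + P' i) +
        (1 - J i) * (min (P i) (MtM i + PIM i) + min (P' i) (VM i + IM i) +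
          min (max (P i - MtM i - PIM i) 0 + max (P' i - VM i - IM i) 0) (DFC i)))
      = -(∑ i, (1 - J i) *
          max (max (P i - MtM i - PIM i) 0 + max (P' i - VM i - IM i) 0 - DFC i) 0) := by
  have key : ∀ i, (J i * (P i + P' i) +
        (1 - J i) * (min (P i) (MtM i + PIM i) + min (P' i) (VM i + IM i) +
          min (max (P i - MtM i - PIM i) 0 + max (P' i - VM i - IM i) 0) (DFC i)))
      + (1 - J i) *
          max (max (P i - MtM i - PIM i) 0 + max (P' i - VM i - IM i) 0 - DFC i) 0
      = P i + P' i := by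
    intro i
    rcases hJ i with h | h <;>
      simp only [h, min_def, max_def] <;> split_ifs <;> linarith
  have hsum : (∑ i, ((J i * (P i + P' i) +
        (1 - J i) * (min (P i) (MtM i + PIM i) + min (P' i) (VM i + IM i) +
          min (max (P i - MtM i - PIM i) 0 + max (P' i - VM i - IM i) 0) (DFC i)))
      + (1 - J i) *
          max (max (P i - MtM i - PIM i) 0 + max (P' i - VM i - IM i) 0 - DFC i) 0))
      = ∑ i, (P i + P' i) := Finset.sum_congr rfl (fun i _ => key i)
  rw [Finset.sum_add_distrib, hclear] at hsum
  linarith
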